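/- Let (ω_i, r_i) be a Poisson point process on ℝ^d × [1,∞) with intensity Leb × ν, ν([r,∞)) = r^{−δ}, and let γ, δ > 0 satisfy γ + δ − d > 0. There is a constant C = C(γ, δ, d) such that for all ε > 0, all R₀ > 1, and all R > C ε^{−1/(γ+δ−d)} ∨ 2R₀, P( sup_{y ∈ B(0,R₀)} Σ_{ω_j ∉ B(0,R)} r_j^{−γ} 1_{B(ω_j, r_j)}(y) > ε ) ≤ exp(−2 ε R^γ). -/

import Mathlib

open MeasureTheory ProbabilityTheory
open scoped ENNReal


open MeasureTheory

lemma exp_tsum (x : ℝ) : ∑' n : ℕ, x ^ n / n.factorial = Real.exp x := by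
  rw [Real.exp_eq_exp_ℝ, NormedSpace.exp_eq_tsum_div]

lemma poisson_term_le (l : ℝ) (hl : 0 ≤ l) (k n : ℕ) :
    Real.exp (-l) * l ^ (n + k) / (n + k).factorial
      ≤ (l ^ k / k.factorial) * (Real.exp (-l) * (l ^ n / n.factorial)) := by
  have hfac : (k.factorial * n.factorial : ℝ) ≤ (n + k).factorial := by
    exact_mod_cast Nat.le_of_dvd (n + k).factorial_pos
      (by simpa [add_comm] using Nat.factorial_mul_factorial_dvd_factorial_add k n)
  have hfp : (0:ℝ) < k.factorial * n.factorial := by positivity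
  have h1 : l ^ (n + k) / (n + k).factorial ≤ l ^ (n + k) / (k.factorial * n.factorial) :=
    div_le_div_of_nonneg_left (by positivity) hfp hfac
  have h2 : (l ^ k / k.factorial) * (Real.exp (-l) * (l ^ n / n.factorial))
      = Real.exp (-l) * (l ^ (n + k) / (k.factorial * n.factorial)) := by
    rw [pow_add]; field_simp
  rw [h2, mul_div_assoc]
  exact mul_le_mul_of_nonneg_left h1 (Real.exp_pos (-l)).le

lemma poisson_tail (l : ℝ) (hl : 0 ≤ l) (k : ℕ) :
    ∑' n : ℕ, Real.exp (-l) * l ^ (n + k) / (n + k).factorial ≤ l ^ k / k.factorial := by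
  have hs : Summable fun n : ℕ => (l ^ k / k.factorial) * (Real.exp (-l) * (l ^ n / n.factorial)) :=
    ((Real.summable_pow_div_factorial l).mul_left _).mul_left _
  calc ∑' n : ℕ, Real.exp (-l) * l ^ (n + k) / (n + k).factorial
      ≤ ∑' n : ℕ, (l ^ k / k.factorial) * (Real.exp (-l) * (l ^ n / n.factorial)) := by
        apply Summable.tsum_le_tsum (poisson_term_le l hl k) _ hs
        apply Summable.of_nonneg_of_le (fun n => by positivity) (poisson_term_le l hl k) hs
    _ = (l ^ k / k.factorial) * (Real.exp (-l) * Real.exp l) := by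
        rw [tsum_mul_left, tsum_mul_left, exp_tsum]
    _ = l ^ k / k.factorial := by rw [← Real.exp_add]; simp

lemma pow_le_factorial_mul_exp (k : ℕ) : (k:ℝ) ^ k ≤ k.factorial * Real.exp k := by
  have h : ((k:ℝ)) ^ k / k.factorial ≤ ∑' n : ℕ, (k:ℝ) ^ n / n.factorial :=
    Summable.le_tsum (Real.summable_pow_div_factorial (k:ℝ)) k (fun n _ => by positivity)
  rw [exp_tsum] at h
  have hfp : (0:ℝ) < k.factorial := by positivity
  calc (k:ℝ) ^ k = ((k:ℝ) ^ k / k.factorial) * k.factorial := by field_simp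
    _ ≤ Real.exp k * k.factorial := mul_le_mul_of_nonneg_right h hfp.le
    _ = k.factorial * Real.exp k := mul_comm _ _

lemma pow_div_factorial_le (l : ℝ) (hl : 0 ≤ l) (k : ℕ) (hk : 1 ≤ k) :
    l ^ k / k.factorial ≤ (Real.exp 1 * l / k) ^ k := by
  have hk0 : (0:ℝ) < k := by exact_mod_cast hk
  have hfp : (0:ℝ) < k.factorial := by positivity
  rw [div_pow, mul_pow, ← Real.exp_nat_mul, mul_one, div_le_div_iff₀ hfp (by positivity)]
  calc l ^ k * (k:ℝ) ^ k ≤ l ^ k * (k.factorial * Real.exp k) :=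
        mul_le_mul_of_nonneg_left (pow_le_factorial_mul_exp k) (by positivity)
    _ = Real.exp (k : ℝ) * l ^ k * k.factorial := by ring

lemma poisson_summable (l : ℝ) (hl : 0 ≤ l) (k : ℕ) :
    Summable fun n : ℕ => Real.exp (-l) * l ^ (n + k) / (n + k).factorial := by
  have hs : Summable fun n : ℕ => (l ^ k / k.factorial) * (Real.exp (-l) * (l ^ n / n.factorial)) :=
    ((Real.summable_pow_div_factorial l).mul_left _).mul_left _
  exact Summable.of_nonneg_of_le (fun n => by positivity) (poisson_term_le l hl k) hs

lemma shell_bound {lam L t t0 B w : ℝ} {k m : ℕ}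
    (hlam : 0 ≤ lam) (hlamL : lam ≤ L) (ht : 0 < t) (ht0 : 0 < t0) (ht0t : t0 ≤ t)
    (hk1 : 1 ≤ k) (hkt : t ≤ (k:ℝ)) (hw0 : 0 < w) (hw1 : w ≤ 1) (hB : 0 < B)
    (hq : Real.exp 1 * L ≤ (Real.exp (-B) * w ^ m) * t) :
    lam ^ k / (k.factorial : ℝ) ≤ Real.exp (-(B * (1 + t0) / 2)) * w ^ m := by
  have hk0 : (0:ℝ) < k := by exact_mod_cast hk1
  have hL0 : 0 ≤ L := hlam.trans hlamL
  have step1 : lam ^ k / (k.factorial : ℝ) ≤ (Real.exp 1 * lam / k) ^ k :=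
    pow_div_factorial_le lam hlam k hk1
  have step2 : Real.exp 1 * lam / k ≤ Real.exp (-B) * w ^ m := by
    have h1 : Real.exp 1 * lam / k ≤ Real.exp 1 * L / t :=
      div_le_div₀ (by positivity) (mul_le_mul_of_nonneg_left hlamL (Real.exp_pos 1).le) ht hkt
    have h2 : Real.exp 1 * L / t ≤ Real.exp (-B) * w ^ m := (div_le_iff₀ ht).2 hq
    exact h1.trans h2
  have step3 : (Real.exp 1 * lam / k) ^ k ≤ (Real.exp (-B) * w ^ m) ^ k :=
    pow_le_pow_left₀ (by positivity) step2 k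
  have step4 : (Real.exp (-B) * w ^ m) ^ k = Real.exp ((k:ℝ) * (-B)) * (w ^ m) ^ k := by
    rw [mul_pow, Real.exp_nat_mul]
  have step5 : Real.exp ((k:ℝ) * (-B)) ≤ Real.exp (-(B * (1 + t0) / 2)) := by
    apply Real.exp_le_exp.2
    have h1 : 1 + t0 ≤ 2 * (k:ℝ) := by
      have := ht0t.trans hkt; push_cast; linarith [hk0, (show (1:ℝ) ≤ k by exact_mod_cast hk1)]
    nlinarith [mul_le_mul_of_nonneg_left h1 hB.le]
  have step6 : (w ^ m) ^ k ≤ w ^ m := by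
    have h1 : w ^ m ≤ 1 := pow_le_one₀ hw0.le hw1
    calc (w ^ m) ^ k ≤ (w ^ m) ^ 1 := pow_le_pow_of_le_one (by positivity) h1 hk1
      _ = w ^ m := pow_one _
  calc lam ^ k / (k.factorial : ℝ) ≤ (Real.exp (-B) * w ^ m) ^ k := step1.trans step3
    _ = Real.exp ((k:ℝ) * (-B)) * (w ^ m) ^ k := step4
    _ ≤ Real.exp (-(B * (1 + t0) / 2)) * w ^ m :=
        mul_le_mul step5 step6 (by positivity) (Real.exp_pos _).le

lemma exists_shell {R x : ℝ} (hR : 0 < R) (hx : R ≤ x) :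
    ∃ m : ℕ, R * 2 ^ m ≤ x ∧ x < 2 * (R * 2 ^ m) := by
  have hex : ∃ n : ℕ, x < 2 * (R * 2 ^ n) := by
    obtain ⟨n, hn⟩ := pow_unbounded_of_one_lt (x / R) (by norm_num : (1:ℝ) < 2)
    refine ⟨n, ?_⟩
    have : x < R * 2 ^ n := by
      rw [div_lt_iff₀ hR] at hn; linarith [hn]
    nlinarith [pow_pos (by norm_num : (0:ℝ) < 2) n]
  classical
  refine ⟨Nat.find hex, ?_, Nat.find_spec hex⟩
  rcases Nat.eq_zero_or_pos (Nat.find hex) with h0 | hpos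
  · rw [h0]; simpa using hx
  · have hlt := Nat.find_min hex (show Nat.find hex - 1 < Nat.find hex by omega)
    push_neg at hlt
    have heq : Nat.find hex = (Nat.find hex - 1) + 1 := by omega
    rw [heq, pow_succ]
    calc R * (2 ^ (Nat.find hex - 1) * 2) = 2 * (R * 2 ^ (Nat.find hex - 1)) := by ring
      _ ≤ x := hlt

open MeasureTheory ProbabilityTheory Metric
open scoped ENNReal


set_option maxHeartbeats 2000000

/-- A Poisson point process on `E` with intensity measure `μ`. -/
def IsPoissonPP {Ω E : Type*} [MeasurableSpace Ω] [MeasurableSpace E]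
    (P : Measure Ω) (N : Ω → Measure E) (μ : Measure E) : Prop :=
  (∀ A : Set E, MeasurableSet A → Measurable fun ω => N ω A) ∧
  (∀ A : Set E, MeasurableSet A → μ A < ⊤ → ∀ n : ℕ,
      P {ω | N ω A = n}
        = ENNReal.ofReal (Real.exp (-(μ A).toReal) * (μ A).toReal ^ n / n.factorial)) ∧
  (∀ (k : ℕ) (A : Fin k → Set E), (∀ i, MeasurableSet (A i)) →
      Pairwise (Function.onFun Disjoint A) →
      iIndepFun
        (fun i ω => N ω (A i)) P)

/-- Weak independence (decorrelation) estimate for Lacoin's potential: the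
contribution at points of `B(0,R₀)` from balls centered outside `B(0,R)` has an
exponentially small probability of exceeding `ε`. -/
theorem stmt_14 {Ω : Type*} [MeasurableSpace Ω] (P : Measure Ω) [IsProbabilityMeasure P]
    (d : ℕ) (hd : 1 ≤ d) (γ δ : ℝ) (hγ : 0 < γ) (hδ : 0 < δ) (hcrit : γ + δ - d > 0)
    (ν : Measure ℝ)
    (hν : ∀ r : ℝ, 1 ≤ r → ν (Set.Ici r) = ENNReal.ofReal (r ^ (-δ)))
    (hν' : ν (Set.Iio 1) = 0)
    (N : Ω → Measure (EuclideanSpace ℝ (Fin d) × ℝ))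
    (hPPP : IsPoissonPP P N ((volume : Measure (EuclideanSpace ℝ (Fin d))).prod ν))
    (T : ℝ → EuclideanSpace ℝ (Fin d) → Ω → ℝ≥0∞)
    (hT : ∀ R y ω, T R y ω = ∫⁻ p : EuclideanSpace ℝ (Fin d) × ℝ,
        (if ‖p.1‖ ≥ R ∧ dist y p.1 < p.2 then ENNReal.ofReal (p.2 ^ (-γ)) else 0) ∂(N ω)) :
    ∃ C > (0:ℝ), ∀ ε > (0:ℝ), ∀ R₀ > (1:ℝ), ∀ R : ℝ,
      R > max (C * ε ^ (-1 / (γ + δ - d))) (2 * R₀) →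
      P {ω | ∃ y : EuclideanSpace ℝ (Fin d), ‖y‖ < R₀ ∧ T R y ω > ENNReal.ofReal ε}
        ≤ ENNReal.ofReal (Real.exp (-2 * ε * R ^ γ)) := by
  classical
  haveI : Nontrivial (EuclideanSpace ℝ (Fin d)) := by
    refine ⟨EuclideanSpace.single ⟨0, hd⟩ 1, 0, fun h => ?_⟩
    have := congrArg (fun x => x ⟨0, hd⟩) h
    simp [EuclideanSpace.single_apply] at this
  haveI : IsFiniteMeasure ν := by
    constructor
    have hu : (Set.univ : Set ℝ) = Set.Iio 1 ∪ Set.Ici 1 := by ext x; simp [lt_or_ge]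
    rw [hu]
    calc ν (Set.Iio 1 ∪ Set.Ici 1) ≤ ν (Set.Iio 1) + ν (Set.Ici 1) := measure_union_le _ _
      _ = ENNReal.ofReal ((1:ℝ) ^ (-δ)) := by rw [hν', hν 1 le_rfl, zero_add]
      _ < ⊤ := ENNReal.ofReal_lt_top
  set α := γ + δ - (d:ℝ) with hα_def
  have hα : 0 < α := hcrit
  set β := min α γ / 2 with hβ_def
  have hβ0 : 0 < β := by rw [hβ_def]; simp [hα, hγ, lt_min_iff]
  have hβα : β ≤ α / 2 := by
    rw [hβ_def]; have := min_le_left α γ; linarith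
  have hβγ : β < γ := by
    rw [hβ_def]; have := min_le_right α γ; linarith
  have hβα' : β ≤ α - β := by linarith
  set w := (2:ℝ) ^ (-β) with hw_def
  have hw0 : 0 < w := Real.rpow_pos_of_pos two_pos _
  have hw1 : w < 1 := Real.rpow_lt_one_of_one_lt_of_neg one_lt_two (by linarith)
  set c0 := 1 - w with hc0_def
  have hc00 : 0 < c0 := by rw [hc0_def]; linarith
  have hc01 : c0 < 1 := by rw [hc0_def]; linarith
  set v := (volume (Metric.ball (0 : EuclideanSpace ℝ (Fin d)) 1)).toReal with hv_def
  have hv0 : 0 ≤ v := ENNReal.toReal_nonneg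
  set K2 := Real.exp 1 * v * 4 ^ (d:ℝ) / c0 with hK2_def
  set M := max K2 1 with hM_def
  have hM1 : 1 ≤ M := le_max_right _ _
  have hM0 : 0 < M := lt_of_lt_of_le one_pos hM1
  have hK2M : Real.exp 1 * v * 4 ^ (d:ℝ) ≤ M * c0 := by
    have h1 : K2 ≤ M := le_max_left _ _
    rw [hK2_def] at h1
    calc Real.exp 1 * v * 4 ^ (d:ℝ) = (Real.exp 1 * v * 4 ^ (d:ℝ) / c0) * c0 := by
          field_simp
      _ ≤ M * c0 := mul_le_mul_of_nonneg_right h1 hc00.le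
  set B := 4 * 2 ^ γ / c0 + 2 * Real.log c0⁻¹ with hB_def
  have hlogc0 : 0 < Real.log c0⁻¹ := Real.log_pos ((one_lt_inv₀ hc00).mpr hc01)
  have hB0 : 0 < B := by
    have : 0 < 4 * 2 ^ γ / c0 := by positivity
    rw [hB_def]; linarith
  refine ⟨2 * (M * Real.exp B) ^ (1/α), by positivity, ?_⟩
  intro ε hε R₀ hR₀ R hR
  rw [gt_iff_lt, max_lt_iff] at hR
  obtain ⟨hRC, hR2R₀⟩ := hR
  have hR2 : 2 < R := by linarith
  have hR0 : 0 < R := by linarith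
  have hRhalf : 1 < R / 2 := by linarith
  have hR₀half : R₀ < R / 2 := by linarith
  -- main quantitative consequence of R > C ε^{-1/α}
  have hεR : M * Real.exp B ≤ ε * (R/2) ^ α := by
    have h1 : (M * Real.exp B) ^ (1/α) * ε ^ (-1/α) < R / 2 := by linarith
    have h2 : ((M * Real.exp B) ^ (1/α) * ε ^ (-1/α)) ^ α < (R/2) ^ α :=
      Real.rpow_lt_rpow (by positivity) h1 hα
    rw [Real.mul_rpow (by positivity) (by positivity), ← Real.rpow_mul (by positivity),
      ← Real.rpow_mul hε.le] at h2
    rw [one_div_mul_cancel hα.ne', Real.rpow_one] at h2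
    have h3 : ε ^ (-1/α * α) = ε⁻¹ := by
      rw [div_mul_cancel₀ _ hα.ne']
      exact Real.rpow_neg_one ε
    rw [h3] at h2
    have h4 : M * Real.exp B = ε * (M * Real.exp B * ε⁻¹) := by field_simp
    nlinarith [mul_lt_mul_of_pos_left h2 hε]
  -- shell geometry
  set u : ℕ → ℝ := fun m => (R/2) * (2:ℝ) ^ (m:ℝ) with hu_def
  have h2m1 : ∀ m : ℕ, (1:ℝ) ≤ (2:ℝ) ^ (m:ℝ) := by
    intro m
    have := Real.rpow_le_rpow_of_exponent_le one_le_two (by positivity : (0:ℝ) ≤ (m:ℝ))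
    simpa using this
  have hu1 : ∀ m, 1 < u m := by
    intro m
    have h := h2m1 m
    rw [hu_def]
    nlinarith
  have hu0 : ∀ m, 0 < u m := fun m => lt_trans one_pos (hu1 m)
  have hu_rpow : ∀ (m : ℕ) (x : ℝ), u m ^ x = (R/2) ^ x * (2:ℝ) ^ ((m:ℝ) * x) := by
    intro m x
    rw [hu_def]
    rw [Real.mul_rpow (by positivity) (by positivity), Real.rpow_mul (by norm_num : (0:ℝ) ≤ 2)]
  have hw_pow : ∀ m : ℕ, w ^ m = (2:ℝ) ^ (-β * (m:ℝ)) := by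
    intro m
    rw [hw_def, ← Real.rpow_natCast ((2:ℝ) ^ (-β)) m, ← Real.rpow_mul (by norm_num : (0:ℝ) ≤ 2),
      mul_comm]
  -- the shell sets
  set A : ℕ → Set (EuclideanSpace ℝ (Fin d) × ℝ) :=
    fun m => {p | 2 * u m ≤ ‖p.1‖ ∧ ‖p.1‖ < 4 * u m ∧ u m ≤ p.2} with hA_def
  have hAmeas : ∀ m, MeasurableSet (A m) := by
    intro m
    have : A m = {p : EuclideanSpace ℝ (Fin d) × ℝ | 2 * u m ≤ ‖p.1‖} ∩
        ({p : EuclideanSpace ℝ (Fin d) × ℝ | ‖p.1‖ < 4 * u m} ∩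
         {p : EuclideanSpace ℝ (Fin d) × ℝ | u m ≤ p.2}) := rfl
    rw [this]
    exact (measurableSet_le measurable_const measurable_fst.norm).inter
      ((measurableSet_lt measurable_fst.norm measurable_const).inter
        (measurableSet_le measurable_const measurable_snd))
  set lam : ℕ → ℝ := fun m => (((volume : Measure (EuclideanSpace ℝ (Fin d))).prod ν) (A m)).toReal
    with hlam_def
  set Λ : ℕ → ℝ := fun m => (4 * u m) ^ (d:ℝ) * v * (u m) ^ (-δ) with hΛ_def
  have hΛ0 : ∀ m, 0 ≤ Λ m := by
    intro m
    rw [hΛ_def]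
    have h1 : (0:ℝ) ≤ (4 * u m) ^ (d:ℝ) := Real.rpow_nonneg (by nlinarith [hu0 m]) _
    have h2 : (0:ℝ) ≤ (u m) ^ (-δ) := Real.rpow_nonneg (hu0 m).le _
    positivity
  have hμ_le : ∀ m, ((volume : Measure (EuclideanSpace ℝ (Fin d))).prod ν) (A m)
      ≤ ENNReal.ofReal (Λ m) := by
    intro m
    have hsub : A m ⊆ Metric.ball (0 : EuclideanSpace ℝ (Fin d)) (4 * u m) ×ˢ Set.Ici (u m) := by
      rintro p ⟨-, h2, h3⟩
      exact ⟨mem_ball_zero_iff.2 h2, h3⟩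
    calc ((volume : Measure (EuclideanSpace ℝ (Fin d))).prod ν) (A m)
        ≤ ((volume : Measure (EuclideanSpace ℝ (Fin d))).prod ν)
          (Metric.ball (0 : EuclideanSpace ℝ (Fin d)) (4 * u m) ×ˢ Set.Ici (u m)) :=
          measure_mono hsub
      _ = volume (Metric.ball (0 : EuclideanSpace ℝ (Fin d)) (4 * u m)) * ν (Set.Ici (u m)) :=
          Measure.prod_prod _ _
      _ = ENNReal.ofReal ((4 * u m) ^ (d:ℕ)) *
            volume (Metric.ball (0 : EuclideanSpace ℝ (Fin d)) 1) *
            ENNReal.ofReal ((u m) ^ (-δ)) := by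
          rw [Measure.addHaar_ball _ _ (by nlinarith [hu0 m] : (0:ℝ) ≤ 4 * u m),
            finrank_euclideanSpace, Fintype.card_fin, hν _ (hu1 m).le]
      _ = ENNReal.ofReal (Λ m) := by
          have hu4 : (0:ℝ) ≤ 4 * u m := by nlinarith [hu0 m]
          have hball : volume (Metric.ball (0 : EuclideanSpace ℝ (Fin d)) 1)
              = ENNReal.ofReal v := by
            rw [hv_def, ENNReal.ofReal_toReal measure_ball_lt_top.ne]
          rw [hball, ← ENNReal.ofReal_mul (pow_nonneg hu4 d),
            ← ENNReal.ofReal_mul (mul_nonneg (pow_nonneg hu4 d) hv0), hΛ_def]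
          rw [← Real.rpow_natCast (4 * u m) d]
  have hμfin : ∀ m, ((volume : Measure (EuclideanSpace ℝ (Fin d))).prod ν) (A m) < ⊤ :=
    fun m => lt_of_le_of_lt (hμ_le m) ENNReal.ofReal_lt_top
  have hlam0 : ∀ m, 0 ≤ lam m := fun m => ENNReal.toReal_nonneg
  have hlamΛ : ∀ m, lam m ≤ Λ m := by
    intro m
    rw [hlam_def]
    calc (((volume : Measure (EuclideanSpace ℝ (Fin d))).prod ν) (A m)).toReal
        ≤ (ENNReal.ofReal (Λ m)).toReal :=
          ENNReal.toReal_mono ENNReal.ofReal_ne_top (hμ_le m)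
      _ = Λ m := ENNReal.toReal_ofReal (hΛ0 m)
  -- thresholds
  set t : ℕ → ℝ := fun m => ε * c0 * w ^ m * u m ^ γ with ht_def
  have ht_pos : ∀ m, 0 < t m := by
    intro m
    have h1 : (0:ℝ) < u m ^ γ := Real.rpow_pos_of_pos (hu0 m) _
    have h2 : (0:ℝ) < w ^ m := pow_pos hw0 m
    rw [ht_def]
    positivity
  set k : ℕ → ℕ := fun m => ⌈t m⌉₊ with hk_def
  have hk1 : ∀ m, 1 ≤ k m := fun m => Nat.one_le_iff_ne_zero.2 (Nat.ceil_pos.2 (ht_pos m)).ne'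
  have hkt : ∀ m, t m ≤ (k m : ℝ) := fun m => Nat.le_ceil _
  have ht0t : ∀ m, t 0 ≤ t m := by
    intro m
    rw [ht_def]
    simp only []
    have key : w ^ 0 * u 0 ^ γ ≤ w ^ m * u m ^ γ := by
      rw [pow_zero, one_mul, hw_pow m, hu_rpow m γ, hu_rpow 0 γ]
      have e1 : (2:ℝ) ^ (((0:ℕ):ℝ) * γ) = 1 := by norm_num
      rw [e1, mul_one]
      have e2 : (2:ℝ) ^ (-β * (m:ℝ)) * ((R/2) ^ γ * (2:ℝ) ^ ((m:ℝ) * γ))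
          = (R/2) ^ γ * (2:ℝ) ^ (-β * (m:ℝ) + (m:ℝ) * γ) := by
        rw [Real.rpow_add two_pos]; ring
      rw [e2]
      have e3 : (1:ℝ) ≤ (2:ℝ) ^ (-β * (m:ℝ) + (m:ℝ) * γ) := by
        have : (0:ℝ) ≤ -β * (m:ℝ) + (m:ℝ) * γ := by nlinarith [Nat.cast_nonneg (α := ℝ) m]
        have := Real.rpow_le_rpow_of_exponent_le one_le_two this
        simpa using this
      nlinarith [Real.rpow_nonneg (by positivity : (0:ℝ) ≤ R/2) γ]
    nlinarith [mul_le_mul_of_nonneg_left key (by positivity : (0:ℝ) ≤ ε * c0)]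
  -- key per-shell inequality
  have hq : ∀ m, Real.exp 1 * Λ m ≤ (Real.exp (-B) * w ^ m) * t m := by
    intro m
    have hXpos : (0:ℝ) < (R/2) ^ α := Real.rpow_pos_of_pos (by linarith) α
    have key : Real.exp 1 * v * 4 ^ (d:ℝ) * u m ^ (-α)
        ≤ (Real.exp (-B) * (ε * c0)) * (w ^ m * w ^ m) := by
      have h2m : (2:ℝ) ^ ((m:ℝ) * (-α)) ≤ (2:ℝ) ^ (-β * (m:ℝ) + -β * (m:ℝ)) := by
        apply Real.rpow_le_rpow_of_exponent_le one_le_two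
        nlinarith [Nat.cast_nonneg (α := ℝ) m]
      have hmain : Real.exp 1 * v * 4 ^ (d:ℝ) * (R/2) ^ (-α) ≤ Real.exp (-B) * (ε * c0) := by
        rw [Real.rpow_neg (by linarith : (0:ℝ) ≤ R/2), ← div_eq_mul_inv, div_le_iff₀ hXpos]
        have h5 : Real.exp (-B) * (ε * c0) * (R/2) ^ α = Real.exp (-B) * c0 * (ε * (R/2) ^ α) := by
          ring
        rw [h5]
        calc Real.exp 1 * v * 4 ^ (d:ℝ) ≤ M * c0 := hK2M
          _ = Real.exp (-B) * c0 * (M * Real.exp B) := by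
              have hEB : Real.exp (-B) * Real.exp B = 1 := by rw [← Real.exp_add]; simp
              linear_combination (-(M * c0)) * hEB
          _ ≤ Real.exp (-B) * c0 * (ε * (R/2) ^ α) := by
              apply mul_le_mul_of_nonneg_left hεR (by positivity)
      calc Real.exp 1 * v * 4 ^ (d:ℝ) * u m ^ (-α)
          = (Real.exp 1 * v * 4 ^ (d:ℝ) * (R/2) ^ (-α)) * (2:ℝ) ^ ((m:ℝ) * (-α)) := by
            rw [hu_rpow m (-α)]; ring
        _ ≤ (Real.exp (-B) * (ε * c0)) * (2:ℝ) ^ (-β * (m:ℝ) + -β * (m:ℝ)) := by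
            apply mul_le_mul hmain h2m (by positivity)
            positivity
        _ = (Real.exp (-B) * (ε * c0)) * (w ^ m * w ^ m) := by
            rw [hw_pow m, ← Real.rpow_add two_pos]
    have lhs_eq : Real.exp 1 * Λ m
        = (Real.exp 1 * v * 4 ^ (d:ℝ) * u m ^ (-α)) * u m ^ γ := by
      rw [hΛ_def]
      simp only []
      rw [Real.mul_rpow (by norm_num : (0:ℝ) ≤ 4) (hu0 m).le]
      have h6 : u m ^ (-α) * u m ^ γ = u m ^ (d:ℝ) * u m ^ (-δ) := by
        rw [← Real.rpow_add (hu0 m), ← Real.rpow_add (hu0 m)]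
        congr 1
        rw [hα_def]; ring
      linear_combination (-(Real.exp 1 * v * 4 ^ (d:ℝ))) * h6
    have rhs_eq : (Real.exp (-B) * w ^ m) * t m
        = ((Real.exp (-B) * (ε * c0)) * (w ^ m * w ^ m)) * u m ^ γ := by
      rw [ht_def]; ring
    rw [lhs_eq, rhs_eq]
    exact mul_le_mul_of_nonneg_right key (Real.rpow_nonneg (hu0 m).le γ)
  -- events
  set Bad : ℕ → Set Ω :=
    fun m => ⋃ n : ℕ, {ω | N ω (A m) = ((n + k m : ℕ) : ℝ≥0∞)} with hBad_def
  set S : ℕ → Set Ω := fun m => ⋃ n : ℕ, {ω | N ω (A m) = (n : ℝ≥0∞)} with hS_def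
  have hmeasN : ∀ (m : ℕ) (n : ℕ), MeasurableSet {ω | N ω (A m) = (n:ℝ≥0∞)} := by
    intro m n
    exact (hPPP.1 (A m) (hAmeas m)) (measurableSet_singleton _)
  have hSmeas : ∀ m, MeasurableSet (S m) := fun m => MeasurableSet.iUnion (fun n => hmeasN m n)
  have hS1 : ∀ m, P (S m) = 1 := by
    intro m
    have hl0 : (0:ℝ) ≤ (((volume : Measure (EuclideanSpace ℝ (Fin d))).prod ν) (A m)).toReal :=
      ENNReal.toReal_nonneg
    set l := (((volume : Measure (EuclideanSpace ℝ (Fin d))).prod ν) (A m)).toReal with hl_def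
    have hdisj : Pairwise (Function.onFun Disjoint
        (fun n : ℕ => {ω | N ω (A m) = (n:ℝ≥0∞)})) := by
      intro a b hab
      simp only [Function.onFun]
      apply Set.disjoint_left.2
      intro ω ha hb
      simp only [Set.mem_setOf_eq] at ha hb
      exact hab (Nat.cast_injective (ha.symm.trans hb))
    have hpmf := hPPP.2.1 (A m) (hAmeas m) (hμfin m)
    have hsummand : (fun n : ℕ => Real.exp (-l) * l ^ n / n.factorial)
        = fun n : ℕ => Real.exp (-l) * (l ^ n / n.factorial) := funext fun n => by ring
    have hsummable : Summable fun n : ℕ => Real.exp (-l) * l ^ n / n.factorial := by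
      rw [hsummand]; exact (Real.summable_pow_div_factorial l).mul_left _
    have hsum : ∑' n : ℕ, Real.exp (-l) * l ^ n / n.factorial = 1 := by
      rw [hsummand, tsum_mul_left, exp_tsum, ← Real.exp_add]; simp
    rw [hS_def]
    rw [measure_iUnion hdisj (fun n => hmeasN m n)]
    calc ∑' n : ℕ, P {ω | N ω (A m) = (n:ℝ≥0∞)}
        = ∑' n : ℕ, ENNReal.ofReal (Real.exp (-l) * l ^ n / n.factorial) :=
          tsum_congr fun n => hpmf n
      _ = ENNReal.ofReal (∑' n : ℕ, Real.exp (-l) * l ^ n / n.factorial) :=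
          (ENNReal.ofReal_tsum_of_nonneg (fun n => div_nonneg
            (mul_nonneg (Real.exp_nonneg _) (pow_nonneg hl0 _)) (Nat.cast_nonneg _))
            hsummable).symm
      _ = 1 := by rw [hsum]; simp
  have hScompl : ∀ m, P ((S m)ᶜ) = 0 := by
    intro m
    rw [measure_compl (hSmeas m) (measure_ne_top P _), hS1 m, measure_univ, tsub_self]
  -- per-shell probability bound
  have hBadBound : ∀ m, P (Bad m)
      ≤ ENNReal.ofReal (Real.exp (-(B * (1 + t 0) / 2)) * w ^ m) := by
    intro m
    have hl0 : (0:ℝ) ≤ (((volume : Measure (EuclideanSpace ℝ (Fin d))).prod ν) (A m)).toReal :=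
      ENNReal.toReal_nonneg
    set l := (((volume : Measure (EuclideanSpace ℝ (Fin d))).prod ν) (A m)).toReal with hl_def
    have hlΛ : l ≤ Λ m := hlamΛ m
    have hpmf := hPPP.2.1 (A m) (hAmeas m) (hμfin m)
    calc P (Bad m) ≤ ∑' n : ℕ, P {ω | N ω (A m) = ((n + k m : ℕ) : ℝ≥0∞)} := by
          rw [hBad_def]; exact measure_iUnion_le _
      _ = ∑' n : ℕ, ENNReal.ofReal (Real.exp (-l) * l ^ (n + k m) / (n + k m).factorial) :=
          tsum_congr fun n => hpmf (n + k m)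
      _ = ENNReal.ofReal (∑' n : ℕ, Real.exp (-l) * l ^ (n + k m) / (n + k m).factorial) :=
          (ENNReal.ofReal_tsum_of_nonneg (fun n => div_nonneg
            (mul_nonneg (Real.exp_nonneg _) (pow_nonneg hl0 _)) (Nat.cast_nonneg _))
            (poisson_summable l hl0 (k m))).symm
      _ ≤ ENNReal.ofReal (l ^ (k m) / (k m).factorial) :=
          ENNReal.ofReal_le_ofReal (poisson_tail l hl0 (k m))
      _ ≤ ENNReal.ofReal (Real.exp (-(B * (1 + t 0) / 2)) * w ^ m) :=
          ENNReal.ofReal_le_ofReal (shell_bound hl0 hlΛ (ht_pos m) (ht_pos 0) (ht0t m)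
            (hk1 m) (hkt m) hw0 hw1.le hB0 (hq m))
  -- the inclusion of the bad event
  have hincl : {ω | ∃ y : EuclideanSpace ℝ (Fin d), ‖y‖ < R₀ ∧ T R y ω > ENNReal.ofReal ε}
      ⊆ (⋃ m, Bad m) ∪ (⋃ m, (S m)ᶜ) := by
    intro ω hω
    by_contra hcon
    rw [Set.mem_union] at hcon
    push_neg at hcon
    obtain ⟨hB1, hS1'⟩ := hcon
    simp only [hBad_def, Set.mem_iUnion, not_exists, Set.mem_setOf_eq] at hB1
    simp only [hS_def, Set.mem_iUnion, not_exists, Set.mem_compl_iff, not_not,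
      Set.mem_setOf_eq, not_forall] at hS1'
    have hSm : ∀ m, ∃ n : ℕ, N ω (A m) = (n:ℝ≥0∞) := by
      intro m
      have h := hS1' m
      simpa [Set.mem_iUnion, Set.mem_setOf_eq] using h
    choose nm hnm using hSm
    have hnmlt : ∀ m, (nm m : ℝ) < t m := by
      intro m
      have hlt : nm m < k m := by
        by_contra hge
        push_neg at hge
        have heq : N ω (A m) = (((nm m - k m) + k m : ℕ) : ℝ≥0∞) := by
          rw [Nat.sub_add_cancel hge]; exact hnm m
        exact hB1 m (nm m - k m) heq
      rw [hk_def] at hlt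
      exact Nat.lt_ceil.1 hlt
    obtain ⟨y, hy, hTgt⟩ := hω
    refine absurd hTgt (not_lt.2 ?_)
    rw [hT]
    have hyu : ∀ m, ‖y‖ ≤ u m := by
      intro m
      have h1 : R / 2 ≤ u m := by
        have := h2m1 m
        rw [hu_def]
        nlinarith
      linarith
    have hpt : ∀ p : EuclideanSpace ℝ (Fin d) × ℝ,
        (if ‖p.1‖ ≥ R ∧ dist y p.1 < p.2 then ENNReal.ofReal (p.2 ^ (-γ)) else 0)
        ≤ ∑' m : ℕ, (A m).indicator (fun _ => ENNReal.ofReal (u m ^ (-γ))) p := by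
      intro p
      split_ifs with hcond
      · obtain ⟨hge, hdist⟩ := hcond
        obtain ⟨m, hm1, hm2⟩ := exists_shell hR0 hge
        have h2u : 2 * u m = R * 2 ^ m := by
          rw [hu_def, ← Real.rpow_natCast (2:ℝ) m]; ring
        have hnorm_lb : ‖p.1‖ - ‖y‖ ≤ dist y p.1 := by
          rw [dist_eq_norm, norm_sub_rev]
          exact norm_sub_norm_le p.1 y
        have hp2 : u m < p.2 := by
          have h3 : 2 * u m ≤ ‖p.1‖ := by rw [h2u]; exact hm1
          have h4 := hyu m
          linarith
        have hpA : p ∈ A m := by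
          refine ⟨by rw [h2u]; exact hm1, ?_, hp2.le⟩
          have : ‖p.1‖ < 2 * (2 * u m) := by rw [h2u]; exact hm2
          linarith
        calc ENNReal.ofReal (p.2 ^ (-γ))
            ≤ (A m).indicator (fun _ => ENNReal.ofReal (u m ^ (-γ))) p := by
              rw [Set.indicator_of_mem hpA]
              exact ENNReal.ofReal_le_ofReal
                (Real.rpow_le_rpow_of_nonpos (hu0 m) hp2.le (by linarith))
          _ ≤ ∑' m' : ℕ, (A m').indicator (fun _ => ENNReal.ofReal (u m' ^ (-γ))) p :=
              ENNReal.le_tsum m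
      · exact zero_le
    calc ∫⁻ p : EuclideanSpace ℝ (Fin d) × ℝ,
          (if ‖p.1‖ ≥ R ∧ dist y p.1 < p.2 then ENNReal.ofReal (p.2 ^ (-γ)) else 0) ∂(N ω)
        ≤ ∫⁻ p, ∑' m : ℕ, (A m).indicator (fun _ => ENNReal.ofReal (u m ^ (-γ))) p ∂(N ω) :=
          lintegral_mono hpt
      _ = ∑' m : ℕ, ∫⁻ p, (A m).indicator (fun _ => ENNReal.ofReal (u m ^ (-γ))) p ∂(N ω) :=
          lintegral_tsum (fun m => (measurable_const.indicator (hAmeas m)).aemeasurable)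
      _ = ∑' m : ℕ, ENNReal.ofReal (u m ^ (-γ)) * N ω (A m) :=
          tsum_congr fun m => lintegral_indicator_const (hAmeas m) _
      _ ≤ ∑' m : ℕ, ENNReal.ofReal (u m ^ (-γ)) * ENNReal.ofReal (t m) := by
          apply ENNReal.tsum_le_tsum
          intro m
          apply mul_le_mul_right
          rw [hnm m, ← ENNReal.ofReal_natCast (nm m)]
          exact ENNReal.ofReal_le_ofReal (hnmlt m).le
      _ = ∑' m : ℕ, ENNReal.ofReal (ε * c0) * (ENNReal.ofReal w) ^ m := by
          apply tsum_congr
          intro m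
          rw [← ENNReal.ofReal_pow hw0.le,
            ← ENNReal.ofReal_mul (Real.rpow_nonneg (hu0 m).le _),
            ← ENNReal.ofReal_mul (by positivity : (0:ℝ) ≤ ε * c0)]
          congr 1
          have huu : u m ^ (-γ) * u m ^ γ = 1 := by
            rw [← Real.rpow_add (hu0 m)]; simp
          rw [ht_def]
          linear_combination (ε * c0 * w ^ m) * huu
      _ = ENNReal.ofReal (ε * c0) * (1 - ENNReal.ofReal w)⁻¹ := by
          rw [ENNReal.tsum_mul_left, ENNReal.tsum_geometric]
      _ = ENNReal.ofReal ε := by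
          have hcw : (1 : ℝ≥0∞) - ENNReal.ofReal w = ENNReal.ofReal c0 := by
            rw [hc0_def, ENNReal.ofReal_sub _ hw0.le, ENNReal.ofReal_one]
          rw [hcw, ENNReal.ofReal_mul hε.le, mul_assoc,
            ENNReal.mul_inv_cancel (ENNReal.ofReal_pos.2 hc00).ne' ENNReal.ofReal_ne_top,
            mul_one]
  -- final assembly
  have hgeo : ∑' m : ℕ, ENNReal.ofReal (Real.exp (-(B * (1 + t 0) / 2)) * w ^ m)
      = ENNReal.ofReal (Real.exp (-(B * (1 + t 0) / 2))) * (1 - ENNReal.ofReal w)⁻¹ := by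
    calc ∑' m : ℕ, ENNReal.ofReal (Real.exp (-(B * (1 + t 0) / 2)) * w ^ m)
        = ∑' m : ℕ, ENNReal.ofReal (Real.exp (-(B * (1 + t 0) / 2))) * (ENNReal.ofReal w) ^ m :=
          tsum_congr fun m => by
            rw [ENNReal.ofReal_mul (Real.exp_nonneg _), ENNReal.ofReal_pow hw0.le]
      _ = ENNReal.ofReal (Real.exp (-(B * (1 + t 0) / 2))) * (1 - ENNReal.ofReal w)⁻¹ := by
          rw [ENNReal.tsum_mul_left, ENNReal.tsum_geometric]
  have hcw : (1 : ℝ≥0∞) - ENNReal.ofReal w = ENNReal.ofReal c0 := by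
    rw [hc0_def, ENNReal.ofReal_sub _ hw0.le, ENNReal.ofReal_one]
  -- the final real-number inequality
  have ht0_eq : t 0 = ε * c0 * (R/2) ^ γ := by
    rw [ht_def, hu_def]
    norm_num
  have hRγ : (2:ℝ) ^ γ * (R/2) ^ γ = R ^ γ := by
    rw [← Real.mul_rpow (by norm_num : (0:ℝ) ≤ 2) (by linarith : (0:ℝ) ≤ R/2)]
    congr 1
    ring
  have hRγpos : (0:ℝ) < (R/2) ^ γ := Real.rpow_pos_of_pos (by linarith) γ
  have h2γpos : (0:ℝ) < (2:ℝ) ^ γ := Real.rpow_pos_of_pos two_pos γ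
  have hBt0 : 4 * ε * R ^ γ ≤ B * t 0 := by
    have h7 : (4 * 2 ^ γ / c0) * t 0 = 4 * ε * ((2:ℝ) ^ γ * (R/2) ^ γ) := by
      rw [ht0_eq]; field_simp
    have h8 : (4 * 2 ^ γ / c0) * t 0 ≤ B * t 0 := by
      apply mul_le_mul_of_nonneg_right _ (ht_pos 0).le
      rw [hB_def]; linarith
    rw [h7, hRγ] at h8
    linarith
  have hexp1 : Real.exp (-(B/2)) ≤ c0 := by
    have hlog : Real.log c0⁻¹ = - Real.log c0 := Real.log_inv c0
    have h9 : -(B/2) ≤ Real.log c0 := by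
      have hpos : (0:ℝ) < 4 * 2 ^ γ / c0 := div_pos (by positivity) hc00
      have hBeq : B = 4 * 2 ^ γ / c0 + 2 * (-Real.log c0) := by rw [hB_def, hlog]
      linarith [hpos, hBeq.le, hBeq.ge]
    calc Real.exp (-(B/2)) ≤ Real.exp (Real.log c0) := Real.exp_le_exp.2 h9
      _ = c0 := Real.exp_log hc00
  have hfinal : Real.exp (-(B * (1 + t 0) / 2)) * c0⁻¹ ≤ Real.exp (-2 * ε * R ^ γ) := by
    have e1 : Real.exp (-(B * (1 + t 0) / 2))
        = Real.exp (-(B/2)) * Real.exp (-(B * t 0 / 2)) := by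
      rw [← Real.exp_add]; congr 1; ring
    have e2 : Real.exp (-(B * t 0 / 2)) ≤ Real.exp (-2 * ε * R ^ γ) := by
      apply Real.exp_le_exp.2
      have e2'' := mul_le_mul_of_nonneg_left hBt0 (by norm_num : (0:ℝ) ≤ 1/2)
      calc -(B * t 0 / 2) = -((1/2) * (B * t 0)) := by ring
        _ ≤ -((1/2) * (4 * ε * R ^ γ)) := neg_le_neg e2''
        _ = -2 * ε * R ^ γ := by ring
    have e3 : Real.exp (-(B/2)) * c0⁻¹ ≤ 1 := by
      rw [← mul_inv_cancel₀ hc00.ne']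
      exact mul_le_mul_of_nonneg_right hexp1 (by positivity)
    calc Real.exp (-(B * (1 + t 0) / 2)) * c0⁻¹
        = (Real.exp (-(B/2)) * c0⁻¹) * Real.exp (-(B * t 0 / 2)) := by rw [e1]; ring
      _ ≤ 1 * Real.exp (-2 * ε * R ^ γ) :=
          mul_le_mul e3 e2 (Real.exp_nonneg _) (by norm_num)
      _ = Real.exp (-2 * ε * R ^ γ) := one_mul _
  calc P {ω | ∃ y : EuclideanSpace ℝ (Fin d), ‖y‖ < R₀ ∧ T R y ω > ENNReal.ofReal ε}
      ≤ P ((⋃ m, Bad m) ∪ (⋃ m, (S m)ᶜ)) := measure_mono hincl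
    _ ≤ P (⋃ m, Bad m) + P (⋃ m, (S m)ᶜ) := measure_union_le _ _
    _ = P (⋃ m, Bad m) := by
        rw [measure_iUnion_null (fun m => hScompl m), add_zero]
    _ ≤ ∑' m : ℕ, P (Bad m) := measure_iUnion_le _
    _ ≤ ∑' m : ℕ, ENNReal.ofReal (Real.exp (-(B * (1 + t 0) / 2)) * w ^ m) :=
        ENNReal.tsum_le_tsum hBadBound
    _ = ENNReal.ofReal (Real.exp (-(B * (1 + t 0) / 2))) * (1 - ENNReal.ofReal w)⁻¹ := hgeo
    _ ≤ ENNReal.ofReal (Real.exp (-2 * ε * R ^ γ)) := by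
        rw [hcw, ← ENNReal.ofReal_inv_of_pos hc00,
          ← ENNReal.ofReal_mul (Real.exp_nonneg _)]
        exact ENNReal.ofReal_le_ofReal hfinal
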